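/- The function ξ(E) = (3/(4 m⁴ π³ G φ₀² a))·(2E/m − 1)(E/m − 1)², for m, G, φ₀, a > 0, satisfies ∫_{m√A}^{m} E² ξ(E) dE = A^{3/2}(1−√A)³/(4π³ m G φ₀² a) for every A ∈ (0,1]. -/

import Mathlib

open Real

/-- The Hernquist energy distribution ξ satisfies the tt self-gravitation
equation: ∫_{m√A}^m E²ξ(E) dE = A^{3/2}(1−√A)³/(4π³mGφ₀²a) for A ∈ (0,1]. -/
theorem stmt_9 (m G φ₀ a : ℝ) (hm : 0 < m) (hG : 0 < G) (hφ : 0 < φ₀) (ha : 0 < a)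
    (ξ : ℝ → ℝ)
    (hξ : ∀ E : ℝ, ξ E = 3 / (4 * m ^ 4 * π ^ 3 * G * φ₀ ^ 2 * a) *
      (2 * E / m - 1) * (E / m - 1) ^ 2) :
    ∀ A : ℝ, 0 < A → A ≤ 1 →
      ∫ E in (m * Real.sqrt A)..m, E ^ 2 * ξ E =
        A ^ ((3 : ℝ) / 2) * (1 - Real.sqrt A) ^ 3 / (4 * π ^ 3 * m * G * φ₀ ^ 2 * a) := by
  intro A hA hA1
  have hm' : m ≠ 0 := hm.ne'
  have hπ : (0:ℝ) < π := Real.pi_pos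
  have hden : 4 * m ^ 4 * π ^ 3 * G * φ₀ ^ 2 * a ≠ 0 := by positivity
  set c : ℝ := 3 / (4 * m ^ 4 * π ^ 3 * G * φ₀ ^ 2 * a) with hc
  set F : ℝ → ℝ := fun E => c * (E ^ 6 / (3 * m ^ 3) - E ^ 5 / m ^ 2 + E ^ 4 / m - E ^ 3 / 3)
    with hF
  have hderiv : ∀ x : ℝ, HasDerivAt F (x ^ 2 * ξ x) x := by
    intro x
    have h : HasDerivAt F (c * (6 * x ^ 5 / (3 * m ^ 3) - 5 * x ^ 4 / m ^ 2
        + 4 * x ^ 3 / m - 3 * x ^ 2 / 3)) x := by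
      have := (((((hasDerivAt_pow 6 x).div_const (3 * m ^ 3)).sub
        ((hasDerivAt_pow 5 x).div_const (m ^ 2))).add
        ((hasDerivAt_pow 4 x).div_const m)).sub
        ((hasDerivAt_pow 3 x).div_const 3)).const_mul c
      exact this.congr_deriv (by norm_num)
    convert h using 1
    rw [hξ]
    field_simp
    ring
  have hcont : Continuous (fun x : ℝ => x ^ 2 * ξ x) := by
    have : (fun x : ℝ => x ^ 2 * ξ x)
        = fun x : ℝ => x ^ 2 * (c * (2 * x / m - 1) * (x / m - 1) ^ 2) := by
      funext x; rw [hξ]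
    rw [this]
    fun_prop
  have key : ∫ E in (m * Real.sqrt A)..m, E ^ 2 * ξ E = F m - F (m * Real.sqrt A) :=
    intervalIntegral.integral_eq_sub_of_hasDerivAt (fun x _ => hderiv x)
      (hcont.intervalIntegrable _ _)
  rw [key]
  have hs : Real.sqrt A ^ 2 = A := Real.sq_sqrt hA.le
  have hA32 : A ^ ((3 : ℝ) / 2) = Real.sqrt A ^ 3 := by
    rw [Real.sqrt_eq_rpow, ← Real.rpow_natCast (A ^ ((1:ℝ)/2)) 3,
      ← Real.rpow_mul hA.le]
    norm_num
  rw [hA32, hF, hc]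
  field_simp
  ring
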